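/- Let (Ω, ℱ, P) be a probability space, α ∈ (0, 1), and ρ : [0, ∞) → [0, ∞) be continuous with ρ(0) = 0 such that ρ^{1/α} is concave. Let η, Z : Ω → [0, ∞) be measurable with E[η^{1/(1−α)}] < ∞ and E[Z] < ∞, and let A ∈ ℱ. Then E[η · ρ(Z) · 1_A] ≤ E[η^{1/(1−α)}]^{1−α} · ( 1 − α + α · ρ(E[Z · 1_A])^{1/α} ). -/

import Mathlib

open MeasureTheory

/-- A nonnegative concave function on `[0,∞)` vanishing at `0` grows at most linearly. -/
lemma aux_concave_growth {φ : ℝ → ℝ} (hconc : ConcaveOn ℝ (Set.Ici 0) φ)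
    (hnn : ∀ v, 0 ≤ v → 0 ≤ φ v) (h0 : φ 0 = 0) {z : ℝ} (hz : 0 ≤ z) :
    φ z ≤ (2 + z) * φ 1 := by
  have h1 : (0:ℝ) ≤ φ 1 := hnn 1 one_pos.le
  rcases le_or_gt z 1 with hle | hgt
  · -- use 1 = a*z + b*2 with a = 1/(2-z), b = (1-z)/(2-z)
    have h2z : (0:ℝ) < 2 - z := by linarith
    have key : (1/(2-z)) • φ z + ((1-z)/(2-z)) • φ 2 ≤
        φ ((1/(2-z)) • z + ((1-z)/(2-z)) • (2:ℝ)) :=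
      hconc.2 (Set.mem_Ici.2 hz) (Set.mem_Ici.2 (by norm_num : (0:ℝ) ≤ 2))
        (div_nonneg one_pos.le h2z.le) (div_nonneg (by linarith) h2z.le)
        (by rw [← add_div, show (1:ℝ)+(1-z)=2-z from by ring]; exact div_self h2z.ne')
    have hcomb : (1 / (2 - z)) • z + ((1 - z) / (2 - z)) • (2:ℝ) = 1 := by
      rw [smul_eq_mul, smul_eq_mul, div_mul_eq_mul_div, div_mul_eq_mul_div, ← add_div,
        div_eq_one_iff_eq h2z.ne']
      ring
    rw [hcomb] at key
    have hφ2 : 0 ≤ ((1 - z) / (2 - z)) * φ 2 :=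
      mul_nonneg (div_nonneg (by linarith) h2z.le) (hnn 2 (by norm_num))
    have h3 : (1 / (2 - z)) * φ z ≤ φ 1 := by
      simp only [smul_eq_mul] at key
      linarith
    have hφz : φ z ≤ (2 - z) * φ 1 := by
      rw [div_mul_eq_mul_div, div_le_iff₀ h2z] at h3
      linarith [h3]
    nlinarith
  · -- use 1 = (1 - 1/z)*0 + (1/z)*z
    have hz0 : (0:ℝ) < z := by linarith
    have key : (1 - 1/z) • φ 0 + (1/z) • φ z ≤ φ ((1 - 1/z) • (0:ℝ) + (1/z) • z) :=
      hconc.2 (Set.mem_Ici.2 le_rfl) (Set.mem_Ici.2 hz)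
        (by rw [sub_nonneg]; exact div_le_one_of_le₀ (by linarith) hz0.le)
        (by positivity) (by ring)
    have hcomb : (1 - 1 / z) • (0:ℝ) + (1 / z) • z = 1 := by
      rw [smul_eq_mul, smul_eq_mul, mul_zero, zero_add, one_div_mul_cancel hz0.ne']
    rw [hcomb] at key
    simp only [smul_eq_mul, h0, mul_zero, zero_add] at key
    have h4 : φ z ≤ z * φ 1 := by
      rw [div_mul_eq_mul_div, div_le_iff₀ hz0] at key
      linarith [key]
    nlinarith

/-- The Hölder–Jensen–Young estimate used in the proof of the paper's second moment
estimate (Proposition 4.3): for `α ∈ (0,1)`, `ρ : [0,∞) → [0,∞)` continuous with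
`ρ(0) = 0` and `ρ^{1/α}` concave, nonnegative `η, Z` with `E[η^{1/(1-α)}] < ∞` and
`E[Z] < ∞`, and an event `A`,
`E[η ρ(Z) 1_A] ≤ E[η^{1/(1-α)}]^{1-α} (1 - α + α ρ(E[Z 1_A])^{1/α})`. -/
theorem stmt_8 {Ω : Type*} [MeasurableSpace Ω] (P : Measure Ω) [IsProbabilityMeasure P]
    (α : ℝ) (hα : α ∈ Set.Ioo (0:ℝ) 1)
    (ρ : ℝ → ℝ) (hρc : ContinuousOn ρ (Set.Ici 0)) (hρ0 : ρ 0 = 0)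
    (hρnn : ∀ v, 0 ≤ v → 0 ≤ ρ v)
    (hconc : ConcaveOn ℝ (Set.Ici 0) (fun v => ρ v ^ (1 / α)))
    (η Z : Ω → ℝ) (hηm : Measurable η) (hZm : Measurable Z)
    (hη0 : ∀ ω, 0 ≤ η ω) (hZ0 : ∀ ω, 0 ≤ Z ω)
    (hηint : Integrable (fun ω => η ω ^ (1 / (1 - α))) P)
    (hZint : Integrable Z P)
    (A : Set Ω) (hA : MeasurableSet A) :
    ∫ ω in A, η ω * ρ (Z ω) ∂P ≤
      (∫ ω, η ω ^ (1 / (1 - α)) ∂P) ^ (1 - α) *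
        (1 - α + α * ρ (∫ ω in A, Z ω ∂P) ^ (1 / α)) := by
  obtain ⟨hα0, hα1⟩ := hα
  have h1α : (0:ℝ) < 1 - α := by linarith
  set φ : ℝ → ℝ := fun v => ρ v ^ (1 / α) with hφdef
  have hφnn : ∀ v, 0 ≤ v → 0 ≤ φ v := fun v hv => Real.rpow_nonneg (hρnn v hv) _
  have hφ0 : φ 0 = 0 := by
    show ρ 0 ^ (1 / α) = 0
    rw [hρ0, Real.zero_rpow (by positivity)]
  have hφcont : ContinuousOn φ (Set.Ici 0) :=
    hρc.rpow_const fun x hx => Or.inr (by positivity)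
  -- measurability of ρ ∘ Z
  have hρZm : Measurable fun ω => ρ (Z ω) := by
    have hg : Continuous fun x : ℝ => ρ (x ⊔ 0) :=
      hρc.comp_continuous (continuous_id.max continuous_const)
        (fun x => Set.mem_Ici.2 (le_max_right _ _))
    have : (fun ω => ρ (Z ω)) = (fun x : ℝ => ρ (x ⊔ 0)) ∘ Z := by
      funext ω; simp [max_eq_left (hZ0 ω)]
    rw [this]; exact hg.measurable.comp hZm
  have hφZm : Measurable fun ω => φ (Z ω) := by
    have hg : Continuous fun x : ℝ => φ (x ⊔ 0) :=
      hφcont.comp_continuous (continuous_id.max continuous_const)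
        (fun x => Set.mem_Ici.2 (le_max_right _ _))
    have : (fun ω => φ (Z ω)) = (fun x : ℝ => φ (x ⊔ 0)) ∘ Z := by
      funext ω; simp [max_eq_left (hZ0 ω)]
    rw [this]; exact hg.measurable.comp hZm
  -- integrability of φ ∘ Z
  have hφZint : Integrable (fun ω => φ (Z ω)) P := by
    refine Integrable.mono' ((integrable_const (2:ℝ)).add hZint |>.mul_const (φ 1))
      hφZm.aestronglyMeasurable ?_
    filter_upwards with ω
    rw [Real.norm_of_nonneg (hφnn _ (hZ0 ω))]
    exact aux_concave_growth hconc hφnn hφ0 (hZ0 ω)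
  -- Jensen
  have hy0 : (0:ℝ) ≤ ∫ ω in A, Z ω ∂P := setIntegral_nonneg hA fun ω _ => hZ0 ω
  have hJensen : ∫ ω in A, φ (Z ω) ∂P ≤ φ (∫ ω in A, Z ω ∂P) := by
    have hind : Integrable (A.indicator Z) P := hZint.indicator hA
    have hcomp : (fun ω => φ (A.indicator Z ω)) = A.indicator fun ω => φ (Z ω) := by
      funext ω
      by_cases h : ω ∈ A <;> simp [Set.indicator, h, hφ0]
    have hgi : Integrable (φ ∘ A.indicator Z) P := by
      show Integrable (fun ω => φ (A.indicator Z ω)) P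
      rw [hcomp]; exact hφZint.indicator hA
    have := hconc.le_map_integral hφcont isClosed_Ici
      (Filter.Eventually.of_forall fun ω =>
        Set.mem_Ici.2 (Set.indicator_nonneg (fun ω _ => hZ0 ω) ω))
      hind hgi
    rwa [integral_indicator hA,
      show (fun x => φ (A.indicator Z x)) = fun ω => φ (A.indicator Z ω) from rfl,
      hcomp, integral_indicator hA] at this
  -- Hölder
  set p : ℝ := 1 / (1 - α) with hpdef
  set q : ℝ := 1 / α with hqdef
  have hpq : Real.HolderConjugate p q := by
    constructor
    · rw [hpdef, hqdef, one_div, one_div, inv_inv, inv_inv]; ring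
    · exact div_pos one_pos h1α
    · exact div_pos one_pos hα0
  have hp0 : (0:ℝ) < p := div_pos one_pos h1α
  have hq0' : (0:ℝ) < q := div_pos one_pos hα0
  have memp : MemLp η (ENNReal.ofReal p) P := by
    have hq0 : ENNReal.ofReal p ≠ 0 := by
      simpa [ENNReal.ofReal_eq_zero, not_le] using hp0
    have hqt : ENNReal.ofReal p ≠ ⊤ := ENNReal.ofReal_ne_top
    refine (memLp_norm_rpow_iff (q := ENNReal.ofReal p) (p := ENNReal.ofReal p)
      hηm.aestronglyMeasurable hq0 hqt).1 ?_
    rw [ENNReal.div_self hq0 hqt, memLp_one_iff_integrable]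
    have : (fun x => ‖η x‖ ^ (ENNReal.ofReal p).toReal) = fun ω => η ω ^ (1 / (1 - α)) := by
      funext ω
      rw [Real.norm_of_nonneg (hη0 ω), ENNReal.toReal_ofReal hp0.le]
    rw [this]; exact hηint
  have memq : MemLp (fun ω => ρ (Z ω)) (ENNReal.ofReal q) P := by
    have hq0 : ENNReal.ofReal q ≠ 0 := by
      simpa [ENNReal.ofReal_eq_zero, not_le] using hq0'
    have hqt : ENNReal.ofReal q ≠ ⊤ := ENNReal.ofReal_ne_top
    refine (memLp_norm_rpow_iff (q := ENNReal.ofReal q) (p := ENNReal.ofReal q)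
      hρZm.aestronglyMeasurable hq0 hqt).1 ?_
    rw [ENNReal.div_self hq0 hqt, memLp_one_iff_integrable]
    have : (fun x => ‖ρ (Z x)‖ ^ (ENNReal.ofReal q).toReal) = fun ω => φ (Z ω) := by
      funext ω
      rw [Real.norm_of_nonneg (hρnn _ (hZ0 ω)), ENNReal.toReal_ofReal hq0'.le]
    rw [this]; exact hφZint
  have hHolder : ∫ ω in A, η ω * ρ (Z ω) ∂P ≤
      (∫ ω in A, η ω ^ p ∂P) ^ (1 / p) * (∫ ω in A, ρ (Z ω) ^ q ∂P) ^ (1 / q) :=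
    integral_mul_le_Lp_mul_Lq_of_nonneg hpq
      (Filter.Eventually.of_forall fun ω => hη0 ω)
      (Filter.Eventually.of_forall fun ω => hρnn _ (hZ0 ω))
      (memp.restrict A) (memq.restrict A)
  have h1p : 1 / p = 1 - α := by rw [hpdef, one_div_one_div]
  have h1q : 1 / q = α := by rw [hqdef, one_div_one_div]
  rw [h1p, h1q] at hHolder
  -- bound the first factor
  have hX0 : (0:ℝ) ≤ ∫ ω in A, η ω ^ p ∂P :=
    setIntegral_nonneg hA fun ω _ => Real.rpow_nonneg (hη0 ω) _
  have hfact1 : (∫ ω in A, η ω ^ p ∂P) ^ (1 - α) ≤ (∫ ω, η ω ^ (1 / (1 - α)) ∂P) ^ (1 - α) := by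
    refine Real.rpow_le_rpow hX0 ?_ h1α.le
    exact setIntegral_le_integral hηint
      (Filter.Eventually.of_forall fun ω => Real.rpow_nonneg (hη0 ω) _)
  -- bound the second factor
  set y : ℝ := ∫ ω in A, Z ω ∂P with hydef
  have hρy : 0 ≤ ρ y := hρnn y hy0
  have hrv : (ρ y ^ (1 / α)) ^ α = ρ y := by
    rw [← Real.rpow_mul hρy, one_div_mul_cancel (ne_of_gt hα0), Real.rpow_one]
  have hintφ0 : (0:ℝ) ≤ ∫ ω in A, φ (Z ω) ∂P :=
    setIntegral_nonneg hA fun ω _ => hφnn _ (hZ0 ω)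
  have hfact2 : (∫ ω in A, ρ (Z ω) ^ q ∂P) ^ α ≤ ρ y := by
    have h1 : (∫ ω in A, ρ (Z ω) ^ q ∂P) ^ α ≤ (φ y) ^ α :=
      Real.rpow_le_rpow hintφ0 hJensen hα0.le
    have h2 : (φ y) ^ α = ρ y := hrv
    rw [h2] at h1; exact h1
  -- Young
  have hYoung : ρ y ≤ 1 - α + α * ρ y ^ (1 / α) := by
    have := Real.geom_mean_le_arith_mean2_weighted (le_of_lt h1α) hα0.le
      zero_le_one (Real.rpow_nonneg hρy (1/α)) (by ring)
    rw [Real.one_rpow, one_mul, hrv, mul_one] at this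
    exact this
  -- combine
  have hE0 : (0:ℝ) ≤ (∫ ω, η ω ^ (1 / (1 - α)) ∂P) ^ (1 - α) :=
    Real.rpow_nonneg (integral_nonneg fun ω => Real.rpow_nonneg (hη0 ω) _) _
  calc ∫ ω in A, η ω * ρ (Z ω) ∂P
      ≤ (∫ ω in A, η ω ^ p ∂P) ^ (1 - α) * (∫ ω in A, ρ (Z ω) ^ q ∂P) ^ α := hHolder
    _ ≤ (∫ ω, η ω ^ (1 / (1 - α)) ∂P) ^ (1 - α) * ρ y :=
        mul_le_mul hfact1 hfact2 (Real.rpow_nonneg (setIntegral_nonneg hA fun ω _ =>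
          Real.rpow_nonneg (hρnn _ (hZ0 ω)) _) _) hE0
    _ ≤ (∫ ω, η ω ^ (1 / (1 - α)) ∂P) ^ (1 - α) * (1 - α + α * ρ y ^ (1 / α)) :=
        mul_le_mul_of_nonneg_left hYoung hE0
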